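/- Given a put function put : S → V → S, there exists at most one get function get : S → V such that (get, put) is well-behaved, i.e., satisfies GetPut (put s (get s) = s for all s) and PutGet (get (put s v) = v for all s, v). Formally, if (get₁, put) and (get₂, put) are both well-behaved, then get₁ = get₂. -/
import Mathlib

theorem unique_get {S V : Type*} (put : S → V → S) (get₁ get₂ : S → V)
    (h1p : ∀ s, put s (get₁ s) = s) (h1g : ∀ s v, get₁ (put s v) = v)
    (h2p : ∀ s, put s (get₂ s) = s) (h2g : ∀ s v, get₂ (put s v) = v) :
    get₁ = get₂ := by
  funext s
  conv_lhs => rw [← h2p s]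
  rw [h1g]
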